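/- arXiv:2204.03875 — 3 statements merged into one kernel-verified Lean document; each statement's English description precedes it below -/
import Mathlib

section
/- For any points p, q ∈ ℝ^d and any integer j ≥ 1, if ‖p−q‖_∞ < 2^{j-1}, then there exists a level-j cell that contains both p and q. -/
noncomputable section

/-- The level-`i` cell determined by `m ∈ ℤ^d` and `b ∈ {0,1}^d`: the axis-parallel cube
`∏_k [m_k·2^i + b_k·2^(i-1), m_k·2^i + b_k·2^(i-1) + 2^i]`. -/
def levelCell (d i : ℕ) (m : Fin d → ℤ) (b : Fin d → Bool) : Set (Fin d → ℝ) :=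
  {p | ∀ k : Fin d,
    (m k : ℝ) * 2 ^ i + (if b k then (2 : ℝ) ^ (i - 1) else 0) ≤ p k ∧
    p k ≤ (m k : ℝ) * 2 ^ i + (if b k then (2 : ℝ) ^ (i - 1) else 0) + 2 ^ i}

lemma stmt2_aux (x y h2 : ℝ) (hpos : 0 < h2) (hxy : |x - y| < h2) :
    (⌊min x y / h2⌋ : ℝ) * h2 ≤ x ∧ x ≤ (⌊min x y / h2⌋ : ℝ) * h2 + 2 * h2 := by
  set t := min x y with ht
  have hlo : (⌊t / h2⌋ : ℝ) * h2 ≤ t := (le_div_iff₀ hpos).mp (Int.floor_le _)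
  have hub : t / h2 < (⌊t / h2⌋ : ℝ) + 1 := Int.lt_floor_add_one _
  have hub' : t < ((⌊t / h2⌋ : ℝ) + 1) * h2 := (div_lt_iff₀ hpos).mp hub
  have hmax : max x y - min x y = |x - y| := by rw [abs_sub_comm]; exact max_sub_min_eq_abs x y
  have hx : x ≤ max x y := le_max_left _ _
  have htx : t ≤ x := min_le_left _ _
  constructor
  · linarith
  · linarith

/-- for points `p, q ∈ ℝ^d` and an integer `j ≥ 1`, if `‖p−q‖_∞ < 2^(j-1)`
then some level-`j` cell contains both `p` and `q`.  (The norm on `Fin d → ℝ` is the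
sup-norm.) -/
theorem stmt2 (d : ℕ) (hd : 1 ≤ d) (p q : Fin d → ℝ) (j : ℕ) (hj : 1 ≤ j)
    (h : ‖p - q‖ < 2 ^ (j - 1)) :
    ∃ (m : Fin d → ℤ) (b : Fin d → Bool), p ∈ levelCell d j m b ∧ q ∈ levelCell d j m b := by
  set h2 : ℝ := 2 ^ (j - 1) with hh2
  have hpos : (0 : ℝ) < h2 := by positivity
  have hj2 : (2 : ℝ) ^ j = 2 * h2 := by
    rw [hh2, ← pow_succ']
    congr 1
    omega
  set n : Fin d → ℤ := fun k => ⌊min (p k) (q k) / h2⌋ with hn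
  have key : ∀ k, ((n k / 2 : ℤ) : ℝ) * 2 ^ j +
      (if (decide (n k % 2 = 1) : Bool) then h2 else 0) = (n k : ℝ) * h2 := by
    intro k
    have hs : (n k : ℝ) = 2 * ((n k / 2 : ℤ) : ℝ) + ((n k % 2 : ℤ) : ℝ) := by
      exact_mod_cast (Int.mul_ediv_add_emod (n k) 2).symm
    rcases Int.emod_two_eq (n k) with h0 | h1
    · rw [h0] at hs
      simp only [h0]
      norm_num
      rw [hj2]
      rw [hs]; ring
    · rw [h1] at hs
      simp only [h1]
      norm_num
      rw [hj2]
      rw [hs]; ring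
  have habs : ∀ k, |p k - q k| < h2 := by
    intro k
    have := norm_le_pi_norm (p - q) k
    simp only [Pi.sub_apply, Real.norm_eq_abs] at this
    linarith
  refine ⟨fun k => n k / 2, fun k => decide (n k % 2 = 1), ?_, ?_⟩
  · intro k
    rw [key k]
    have := stmt2_aux (p k) (q k) h2 hpos (habs k)
    constructor
    · exact this.1
    · rw [hj2]; exact this.2
  · intro k
    rw [key k]
    have := stmt2_aux (q k) (p k) h2 hpos (by rw [abs_sub_comm]; exact habs k)
    rw [min_comm (q k) (p k)] at this
    constructor
    · exact this.1
    · rw [hj2]; exact this.2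
end
end

section
/- Let S ⊆ ℝ^d be a nonempty set and j ≥ 1 an integer such that ‖p−q‖_∞ < 2^{j-1} for all p, q ∈ S. Then there exists a level-j cell that contains all of S. -/
noncomputable section

/-- if `S ⊆ ℝ^d` is nonempty, `j ≥ 1`, and `‖p−q‖_∞ < 2^(j-1)` for all
`p, q ∈ S`, then some level-`j` cell contains all of `S`.  (The norm on `Fin d → ℝ` is
the sup-norm.) -/
theorem stmt3 (d : ℕ) (hd : 1 ≤ d) (S : Set (Fin d → ℝ)) (hS : S.Nonempty)
    (j : ℕ) (hj : 1 ≤ j) (h : ∀ p ∈ S, ∀ q ∈ S, ‖p - q‖ < 2 ^ (j - 1)) :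
    ∃ (m : Fin d → ℤ) (b : Fin d → Bool), S ⊆ levelCell d j m b := by
  set H : ℝ := 2 ^ (j - 1) with hH
  have hpos : (0:ℝ) < H := by positivity
  obtain ⟨p0, hp0⟩ := hS
  have coordbd : ∀ (k : Fin d), ∀ p ∈ S, ∀ q ∈ S, |p k - q k| < H := by
    intro k p hp q hq
    have h1 : |p k - q k| ≤ ‖p - q‖ := by
      simpa using norm_le_pi_norm (p - q) k
    exact lt_of_le_of_lt h1 (h p hp q hq)
  have key : ∀ k : Fin d, ∃ n : ℤ, ∀ p ∈ S,
      (n : ℝ) * H ≤ p k ∧ p k ≤ (n : ℝ) * H + 2 * H := by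
    intro k
    set T := (fun p : Fin d → ℝ => p k) '' S with hT
    have hTne : T.Nonempty := ⟨p0 k, p0, hp0, rfl⟩
    have hbdd : BddBelow T := by
      refine ⟨p0 k - H, ?_⟩
      rintro _ ⟨q, hq, rfl⟩
      have := coordbd k p0 hp0 q hq
      have := abs_lt.mp this
      linarith [this.1, this.2]
    set m0 := sInf T with hm0
    refine ⟨⌊m0 / H⌋, ?_⟩
    intro p hp
    have hmem : p k ∈ T := ⟨p, hp, rfl⟩
    have h1 : m0 ≤ p k := csInf_le hbdd hmem
    have h2 : p k - H ≤ m0 := by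
      apply le_csInf hTne
      rintro _ ⟨q, hq, rfl⟩
      have := abs_lt.mp (coordbd k p hp q hq)
      linarith [this.1, this.2]
    have hfl : (⌊m0 / H⌋ : ℝ) ≤ m0 / H := Int.floor_le _
    have hfl2 : m0 / H < ⌊m0 / H⌋ + 1 := Int.lt_floor_add_one _
    have hfl' : (⌊m0 / H⌋ : ℝ) * H ≤ m0 := by
      rw [← le_div_iff₀ hpos]; exact hfl
    have hfl2' : m0 < ((⌊m0 / H⌋ : ℝ) + 1) * H := by
      rw [← div_lt_iff₀ hpos]; exact hfl2
    constructor <;> nlinarith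
  choose n hn using key
  refine ⟨fun k => n k / 2, fun k => decide (n k % 2 = 1), ?_⟩
  intro p hp k
  have h2j : (2 : ℝ) ^ j = 2 * H := by
    rw [hH, ← pow_succ']
    congr 1
    omega
  have hdm : 2 * (n k / 2) + n k % 2 = n k := Int.mul_ediv_add_emod (n k) 2
  have hmod : n k % 2 = 0 ∨ n k % 2 = 1 := Int.emod_two_eq_zero_or_one (n k)
  have heq : ((n k / 2 : ℤ) : ℝ) * 2 ^ j +
      (if decide (n k % 2 = 1) then H else 0) = (n k : ℝ) * H := by
    rcases hmod with hm | hm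
    · have hz : n k = 2 * (n k / 2) := by omega
      have hc := congrArg (fun z : ℤ => (z : ℝ)) hz
      push_cast at hc
      rw [h2j, if_neg (by simp [hm]), hc]
      ring
    · have hz : n k = 2 * (n k / 2) + 1 := by omega
      have hc := congrArg (fun z : ℤ => (z : ℝ)) hz
      push_cast at hc
      rw [h2j, if_pos (by simp [hm]), hc]
      ring

  have := hn k p hp
  constructor
  · rw [heq]; exact this.1
  · rw [heq, h2j]; linarith [this.2]
end
end

section
/- Let M be a matching of size i < n between A and B. Then (n − i) · adj*_{ε̄,M} ≤ cost(M_opt) + c0·ε̄·(cost(M_opt) + cost(M)) = (1 + c0·ε̄)·cost(M_opt) + c0·ε̄·cost(M). -/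
open scoped Classical

noncomputable section

/-- Points in `d`-dimensional Euclidean space. -/
abbrev Pt (d : ℕ) : Type := EuclideanSpace ℝ (Fin d)

/-- `M` is a matching between `A` and `B`: every edge is a pair in `A × B`, and no point
appears in more than one edge. -/
def IsMatching {d : ℕ} (A B : Finset (Pt d)) (M : Finset (Pt d × Pt d)) : Prop :=
  (∀ e ∈ M, e.1 ∈ A ∧ e.2 ∈ B) ∧
  (∀ e ∈ M, ∀ e' ∈ M, e.1 = e'.1 → e = e') ∧
  (∀ e ∈ M, ∀ e' ∈ M, e.2 = e'.2 → e = e')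

/-- The cost of a matching: the sum of Euclidean lengths of its edges. -/
def matchCost {d : ℕ} (M : Finset (Pt d × Pt d)) : ℝ :=
  ∑ e ∈ M, dist e.1 e.2

/-- A point is free with respect to `M` if it lies in no edge of `M`. -/
def IsFree {d : ℕ} (M : Finset (Pt d × Pt d)) (p : Pt d) : Prop :=
  ∀ e ∈ M, e.1 ≠ p ∧ e.2 ≠ p

/-- The edge of the complete bipartite graph joining `u` and `v`, oriented as a pair in
`A × B`. -/
def edgeOf {d : ℕ} (A : Finset (Pt d)) (u v : Pt d) : Pt d × Pt d :=
  if u ∈ A then (u, v) else (v, u)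

/-- The edges of a path given by its list of vertices. -/
def pathEdges {d : ℕ} (A : Finset (Pt d)) (L : List (Pt d)) : List (Pt d × Pt d) :=
  (L.zip L.tail).map fun uv => edgeOf A uv.1 uv.2

/-- The edges of a cycle given by its list of vertices (including the wrap-around edge). -/
def cycleEdges {d : ℕ} (A : Finset (Pt d)) (L : List (Pt d)) : List (Pt d × Pt d) :=
  pathEdges A (L ++ L.take 1)

/-- Two consecutive edges alternate: exactly one of them is a matching edge. -/
def AltRel {d : ℕ} (M : Finset (Pt d × Pt d)) (e f : Pt d × Pt d) : Prop :=
  e ∈ M ↔ f ∉ M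

/-- An alternating path with respect to `M`: a simple path in the complete bipartite graph
on `A` and `B` whose edges alternate between edges of `M` and edges not in `M`. -/
def IsAltPath {d : ℕ} (A B : Finset (Pt d)) (M : Finset (Pt d × Pt d))
    (L : List (Pt d)) : Prop :=
  2 ≤ L.length ∧ L.Nodup ∧ (∀ p ∈ L, p ∈ A ∪ B) ∧
  L.Chain' (fun u v => (u ∈ A ∧ v ∈ B) ∨ (u ∈ B ∧ v ∈ A)) ∧
  (pathEdges A L).Chain' (AltRel M)

/-- An augmenting path: an alternating path whose two endpoints are free. -/
def IsAugPath {d : ℕ} (A B : Finset (Pt d)) (M : Finset (Pt d × Pt d))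
    (L : List (Pt d)) : Prop :=
  IsAltPath A B M L ∧
  (∀ p, L.head? = some p → IsFree M p) ∧
  (∀ p, L.getLast? = some p → IsFree M p)

/-- An alternating cycle with respect to `M`: a simple cycle in the complete bipartite
graph on `A` and `B` whose edges alternate between edges of `M` and edges not in `M`
(including around the wrap-around edge). -/
def IsAltCycle {d : ℕ} (A B : Finset (Pt d)) (M : Finset (Pt d × Pt d))
    (L : List (Pt d)) : Prop :=
  4 ≤ L.length ∧ L.Nodup ∧ (∀ p ∈ L, p ∈ A ∪ B) ∧
  (L ++ L.take 1).Chain' (fun u v => (u ∈ A ∧ v ∈ B) ∨ (u ∈ B ∧ v ∈ A)) ∧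
  (cycleEdges A L).Chain' (AltRel M) ∧
  (∀ e f, (cycleEdges A L).head? = some e → (cycleEdges A L).getLast? = some f →
    AltRel M f e)

/-- The Euclidean length `‖Π‖` of a path or cycle given by its list of edges. -/
def eucLen {d : ℕ} (E : List (Pt d × Pt d)) : ℝ :=
  (E.map fun e => dist e.1 e.2).sum

/-- The net cost of an alternating path or cycle given by its list of edges:
non-matching edges count positively, matching edges negatively. -/
def netCost {d : ℕ} (M : Finset (Pt d × Pt d)) (E : List (Pt d × Pt d)) : ℝ :=
  (E.map fun e => if e ∈ M then -(dist e.1 e.2) else dist e.1 e.2).sum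

/-- The `θ`-adjusted cost `adj_{θ,M}(Π) = netcost_M(Π) + c0·θ·‖Π‖`. -/
def adjCost {d : ℕ} (c0 θ : ℝ) (M : Finset (Pt d × Pt d))
    (E : List (Pt d × Pt d)) : ℝ :=
  netCost M E + c0 * θ * eucLen E

/-- The set of `θ`-adjusted costs of augmenting paths with respect to `M`;
`adj*_{θ,M}` is its least element. -/
def adjSet {d : ℕ} (c0 θ : ℝ) (A B : Finset (Pt d)) (M : Finset (Pt d × Pt d)) : Set ℝ :=
  {x | ∃ L : List (Pt d), IsAugPath A B M L ∧ adjCost c0 θ M (pathEdges A L) = x}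


section Aux

variable {d : ℕ}

lemma matchCost_nonneg (S : Finset (Pt d × Pt d)) : 0 ≤ matchCost S :=
  Finset.sum_nonneg fun _ _ => dist_nonneg

lemma netCost_cons (M : Finset (Pt d × Pt d)) (e : Pt d × Pt d) (E : List (Pt d × Pt d)) :
    netCost M (e :: E) = (if e ∈ M then -(dist e.1 e.2) else dist e.1 e.2) + netCost M E := by
  simp [netCost]

lemma eucLen_cons (e : Pt d × Pt d) (E : List (Pt d × Pt d)) :
    eucLen (e :: E) = dist e.1 e.2 + eucLen E := by simp [eucLen]

lemma pathEdges_cons (A : Finset (Pt d)) (x y : Pt d) (l : List (Pt d)) :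
    pathEdges A (x::y::l) = edgeOf A x y :: pathEdges A (y::l) := rfl

lemma pathEdges_length (A : Finset (Pt d)) (x : Pt d) (l : List (Pt d)) :
    (pathEdges A (x :: l)).length = l.length := by simp [pathEdges]

lemma list_mul_le_sum (l : List ℝ) (c : ℝ) (h : ∀ x ∈ l, c ≤ x) :
    (l.length : ℝ) * c ≤ l.sum := by
  induction l with
  | nil => simp
  | cons x t ih =>
    have h1 : c ≤ x := h x (by simp)
    have h2 := ih (fun y hy => h y (by simp [hy]))
    simp only [List.length_cons, List.sum_cons]
    push_cast
    nlinarith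

/-- The key inner lemma: construction of a single alternating path starting at `a`,
following alternately `Mo`-edges and `M`-edges, ending at an `M`-free vertex. -/
lemma buildPath (A B : Finset (Pt d)) (hAB : Disjoint A B)
    (M : Finset (Pt d × Pt d)) (hM : IsMatching A B M) :
    ∀ m : ℕ, ∀ A' B' : Finset (Pt d), ∀ Mo : Finset (Pt d × Pt d), ∀ a : Pt d,
    A'.card = m → A' ⊆ A → B' ⊆ B → IsMatching A' B' Mo → Mo.card = m →
    a ∈ A' →
    (∀ e ∈ M, e.2 ∈ B' → e.1 ∈ A') →
    (∀ e ∈ M, e.1 = a → e.2 ∉ B') →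
    ∃ (L : List (Pt d)) (PA PB : Finset (Pt d)),
      L.head? = some a ∧ 2 ≤ L.length ∧ L.Nodup ∧
      L.toFinset = PA ∪ PB ∧ PA ⊆ A' ∧ PB ⊆ B' ∧ a ∈ PA ∧
      PA.card = PB.card ∧
      (∀ p, L.getLast? = some p → IsFree M p) ∧
      L.Chain' (fun u v => (u ∈ A ∧ v ∈ B) ∨ (u ∈ B ∧ v ∈ A)) ∧
      (pathEdges A L).Chain' (AltRel M) ∧
      (∀ e, (pathEdges A L).head? = some e → e ∉ M) ∧
      netCost M (pathEdges A L) ≤ matchCost (Mo.filter (fun e => e.1 ∈ PA)) ∧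
      eucLen (pathEdges A L) ≤ matchCost (Mo.filter (fun e => e.1 ∈ PA))
        + matchCost (M.filter (fun e => e.2 ∈ PB)) ∧
      (∀ e ∈ M, e.2 ∈ PB → e.1 ∈ PA) ∧
      (∀ e ∈ M, e.1 ∈ PA → e.1 = a ∨ e.2 ∈ PB) ∧
      (∀ e ∈ Mo, (e.1 ∈ PA ↔ e.2 ∈ PB)) ∧
      (M.filter (fun e => e.2 ∈ PB)).card + 1 = PA.card := by
  intro m
  induction m using Nat.strong_induction_on with
  | _ m IH =>
  intro A' B' Mo a hcard hA'A hB'B hMo hMocard haA' hC hInv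
  -- find the Mo-edge at a
  have himg : Mo.image Prod.fst = A' := by
    apply Finset.eq_of_subset_of_card_le
    · intro x hx
      obtain ⟨e, he, rfl⟩ := Finset.mem_image.mp hx
      exact (hMo.1 e he).1
    · rw [Finset.card_image_of_injOn (fun e he e' he' h => hMo.2.1 e he e' he' h),
        hMocard, hcard]
  obtain ⟨e0, he0Mo, he0a⟩ := Finset.mem_image.mp (himg ▸ haA')
  obtain ⟨a0, b0⟩ := e0
  simp only at he0a
  have hab0Mo : (a, b0) ∈ Mo := by rwa [he0a] at he0Mo
  have hb0B' : b0 ∈ B' := (hMo.1 _ hab0Mo).2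
  have hb0B : b0 ∈ B := hB'B hb0B'
  have haA : a ∈ A := hA'A haA'
  have hb0nA : b0 ∉ A := Finset.disjoint_right.mp hAB hb0B
  have hane : a ≠ b0 := fun h => hb0nA (h ▸ haA)
  have hab0M : (a, b0) ∉ M := fun h => hInv _ h rfl hb0B'
  by_cases hfree : ∃ e ∈ M, e.2 = b0
  · -- b0 is matched in M; recurse
    obtain ⟨e1, he1M, he1b⟩ := hfree
    obtain ⟨a1, b0'⟩ := e1
    simp only at he1b
    have he1M' : (a1, b0) ∈ M := by rwa [he1b] at he1M
    clear he1M he1b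
    have ha1A' : a1 ∈ A' := hC _ he1M' hb0B'
    have ha1A : a1 ∈ A := hA'A ha1A'
    have ha1a : a1 ≠ a := fun h => hInv _ he1M' h hb0B'
    have hm1 : 1 ≤ m := by
      rw [← hcard]; exact Finset.card_pos.mpr ⟨a, haA'⟩
    -- recursive data
    have hA''card : (A'.erase a).card = m - 1 := by
      rw [Finset.card_erase_of_mem haA', hcard]
    have hMo'card : (Mo.erase (a, b0)).card = m - 1 := by
      rw [Finset.card_erase_of_mem hab0Mo, hMocard]
    have hMo' : IsMatching (A'.erase a) (B'.erase b0) (Mo.erase (a, b0)) := by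
      refine ⟨fun e he => ?_, fun e he e' he' h => hMo.2.1 e (Finset.mem_of_mem_erase he)
        e' (Finset.mem_of_mem_erase he') h, fun e he e' he' h => hMo.2.2 e
        (Finset.mem_of_mem_erase he) e' (Finset.mem_of_mem_erase he') h⟩
      obtain ⟨hne, heMo⟩ := Finset.mem_erase.mp he
      refine ⟨Finset.mem_erase.mpr ⟨fun h => hne ?_, (hMo.1 e heMo).1⟩,
        Finset.mem_erase.mpr ⟨fun h => hne ?_, (hMo.1 e heMo).2⟩⟩
      · exact hMo.2.1 e heMo (a, b0) hab0Mo h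
      · exact hMo.2.2 e heMo (a, b0) hab0Mo h
    have hC'' : ∀ e ∈ M, e.2 ∈ B'.erase b0 → e.1 ∈ A'.erase a := by
      intro e heM he2
      obtain ⟨hne, he2B'⟩ := Finset.mem_erase.mp he2
      exact Finset.mem_erase.mpr ⟨fun h => hInv e heM h he2B', hC e heM he2B'⟩
    have hInv'' : ∀ e ∈ M, e.1 = a1 → e.2 ∉ B'.erase b0 := by
      intro e heM h1 h2
      have : e = (a1, b0) := hM.2.1 e heM (a1, b0) he1M' h1
      rw [this] at h2
      exact (Finset.mem_erase.mp h2).1 rfl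
    have ha1A'' : a1 ∈ A'.erase a := Finset.mem_erase.mpr ⟨ha1a, ha1A'⟩
    obtain ⟨L', PA', PB', hhead', hlen', hnd', htf', hPA'sub, hPB'sub, ha1PA', hcard',
        hlast', hbip', halt', hfirst', hnet', heuc', hcrossB', hcrossA', hMocross',
        hcount'⟩ :=
      IH (m - 1) (by omega) (A'.erase a) (B'.erase b0) (Mo.erase (a, b0)) a1
        hA''card (fun x hx => hA'A (Finset.mem_of_mem_erase hx))
        (fun x hx => hB'B (Finset.mem_of_mem_erase hx)) hMo' hMo'card ha1A'' hC'' hInv''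
    obtain ⟨x, rest, rfl⟩ : ∃ x rest, L' = x :: rest := by
      cases L' with
      | nil => simp at hhead'
      | cons x rest => exact ⟨x, rest, rfl⟩
    have hx : a1 = x := by
      have h' : x = a1 := by simpa using hhead'
      exact h'.symm
    subst hx
    have hrest : rest ≠ [] := by
      intro h; rw [h] at hlen'; simp at hlen'
    have hanPA' : a ∉ PA' := fun h => (Finset.mem_erase.mp (hPA'sub h)).1 rfl
    have hb0nPB' : b0 ∉ PB' := fun h => (Finset.mem_erase.mp (hPB'sub h)).1 rfl
    have hPA'A : PA' ⊆ A := fun x hx => hA'A (Finset.mem_of_mem_erase (hPA'sub hx))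
    have hPB'B : PB' ⊆ B := fun x hx => hB'B (Finset.mem_of_mem_erase (hPB'sub hx))
    have hanL' : a ∉ (a1 :: rest) := by
      intro h
      have : a ∈ PA' ∪ PB' := by rw [← htf']; exact List.mem_toFinset.mpr h
      rcases Finset.mem_union.mp this with h' | h'
      · exact hanPA' h'
      · exact (Finset.disjoint_left.mp hAB haA) (hPB'B h')
    have hb0nL' : b0 ∉ (a1 :: rest) := by
      intro h
      have : b0 ∈ PA' ∪ PB' := by rw [← htf']; exact List.mem_toFinset.mpr h
      rcases Finset.mem_union.mp this with h' | h'
      · exact hb0nA (hPA'A h')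
      · exact hb0nPB' h'
    have hMoPA : Mo.filter (fun e => e.1 ∈ insert a PA')
        = insert (a, b0) ((Mo.erase (a,b0)).filter (fun e => e.1 ∈ PA')) := by
      ext e
      simp only [Finset.mem_filter, Finset.mem_insert, Finset.mem_erase]
      constructor
      · rintro ⟨heMo, h1 | h1⟩
        · exact Or.inl (hMo.2.1 e heMo (a, b0) hab0Mo h1)
        · refine Or.inr ⟨⟨fun h => ?_, heMo⟩, h1⟩
          rw [h] at h1; exact hanPA' h1
      · rintro (rfl | ⟨⟨hne, heMo⟩, h1⟩)
        · exact ⟨hab0Mo, Or.inl rfl⟩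
        · exact ⟨heMo, Or.inr h1⟩
    have hab0nf : (a, b0) ∉ (Mo.erase (a,b0)).filter (fun e => e.1 ∈ PA') := by
      simp [Finset.mem_filter]
    have hMoPAcost : matchCost (Mo.filter (fun e => e.1 ∈ insert a PA'))
        = dist a b0 + matchCost ((Mo.erase (a,b0)).filter (fun e => e.1 ∈ PA')) := by
      rw [hMoPA, matchCost, Finset.sum_insert hab0nf]; rfl
    have hMPB : M.filter (fun e => e.2 ∈ insert b0 PB')
        = insert (a1, b0) (M.filter (fun e => e.2 ∈ PB')) := by
      ext e
      simp only [Finset.mem_filter, Finset.mem_insert]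
      constructor
      · rintro ⟨heM, h1 | h1⟩
        · exact Or.inl (hM.2.2 e heM (a1, b0) he1M' h1)
        · exact Or.inr ⟨heM, h1⟩
      · rintro (rfl | ⟨heM, h1⟩)
        · exact ⟨he1M', Or.inl rfl⟩
        · exact ⟨heM, Or.inr h1⟩
    have ha1b0nf : (a1, b0) ∉ M.filter (fun e => e.2 ∈ PB') := by
      simp [Finset.mem_filter, hb0nPB']
    have hMPBcost : matchCost (M.filter (fun e => e.2 ∈ insert b0 PB'))
        = dist a1 b0 + matchCost (M.filter (fun e => e.2 ∈ PB')) := by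
      rw [hMPB, matchCost, Finset.sum_insert ha1b0nf]; rfl
    have hpe : pathEdges A (a :: b0 :: a1 :: rest)
        = (a, b0) :: (a1, b0) :: pathEdges A (a1 :: rest) := by
      rw [pathEdges_cons, pathEdges_cons]
      simp [edgeOf, haA, hb0nA]
    have hEne : pathEdges A (a1 :: rest) ≠ [] := by
      intro h
      have h2 := pathEdges_length A a1 rest
      rw [h] at h2
      cases rest with
      | nil => exact hrest rfl
      | cons _ _ => simp at h2
    obtain ⟨f0, E', hE'⟩ : ∃ f0 E', pathEdges A (a1 :: rest) = f0 :: E' :=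
      List.exists_cons_of_ne_nil hEne
    have hf0 : f0 ∉ M := hfirst' f0 (by rw [hE']; rfl)
    refine ⟨a :: b0 :: a1 :: rest, insert a PA', insert b0 PB', rfl, by simp, ?_, ?_,
      ?_, ?_, Finset.mem_insert_self _ _, ?_, ?_, ?_, ?_, ?_, ?_, ?_, ?_, ?_, ?_, ?_⟩
    · rw [List.nodup_cons, List.nodup_cons]
      refine ⟨?_, hb0nL', hnd'⟩
      intro h
      rcases List.mem_cons.mp h with h | h
      · exact hane h
      · exact hanL' h
    · rw [List.toFinset_cons, List.toFinset_cons, htf']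
      ext p
      simp only [Finset.mem_insert, Finset.mem_union]
      tauto
    · intro x hx
      rcases Finset.mem_insert.mp hx with rfl | hx
      · exact haA'
      · exact Finset.mem_of_mem_erase (hPA'sub hx)
    · intro x hx
      rcases Finset.mem_insert.mp hx with rfl | hx
      · exact hb0B'
      · exact Finset.mem_of_mem_erase (hPB'sub hx)
    · rw [Finset.card_insert_of_notMem hanPA', Finset.card_insert_of_notMem hb0nPB',
        hcard']
    · intro p hp
      apply hlast'
      rw [← hp, List.getLast?_cons_cons, List.getLast?_cons_cons]
    · unfold List.Chain'; rw [List.isChain_cons_cons, List.isChain_cons_cons]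
      exact ⟨Or.inl ⟨haA, hb0B⟩, Or.inr ⟨hb0B, ha1A⟩, hbip'⟩
    · rw [hpe, hE']; unfold List.Chain'; rw [List.isChain_cons_cons, List.isChain_cons_cons]
      refine ⟨iff_of_false hab0M (not_not_intro he1M'), iff_of_true he1M' hf0, ?_⟩
      rw [← hE']
      exact halt'
    · intro e he
      rw [hpe] at he
      have : (a, b0) = e := by simpa using he
      exact this ▸ hab0M
    · rw [hpe, netCost_cons, netCost_cons, if_neg hab0M, if_pos he1M', hMoPAcost]
      have hd : (0:ℝ) ≤ dist a1 b0 := dist_nonneg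
      dsimp only
      linarith [hnet']
    · rw [hpe, eucLen_cons, eucLen_cons, hMoPAcost, hMPBcost]
      dsimp only
      linarith [heuc']
    · intro e heM h2
      rcases Finset.mem_insert.mp h2 with h2 | h2
      · have he : e = (a1, b0) := hM.2.2 e heM (a1, b0) he1M' h2
        rw [he]
        exact Finset.mem_insert.mpr (Or.inr ha1PA')
      · exact Finset.mem_insert.mpr (Or.inr (hcrossB' e heM h2))
    · intro e heM h1
      rcases Finset.mem_insert.mp h1 with h1 | h1
      · exact Or.inl h1
      · rcases hcrossA' e heM h1 with h | h
        · have he : e = (a1, b0) := hM.2.1 e heM (a1, b0) he1M' h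
          rw [he]
          exact Or.inr (Finset.mem_insert_self _ _)
        · exact Or.inr (Finset.mem_insert.mpr (Or.inr h))
    · intro e heMo
      constructor
      · intro h1
        rcases Finset.mem_insert.mp h1 with h1 | h1
        · have he : e = (a, b0) := hMo.2.1 e heMo (a, b0) hab0Mo h1
          rw [he]; exact Finset.mem_insert_self _ _
        · have hne : e ≠ (a, b0) := by
            intro h; rw [h] at h1; exact hanPA' h1
          have h3 := (hMocross' e (Finset.mem_erase.mpr ⟨hne, heMo⟩)).mp h1
          exact Finset.mem_insert.mpr (Or.inr h3)
      · intro h2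
        rcases Finset.mem_insert.mp h2 with h2 | h2
        · have he : e = (a, b0) := hMo.2.2 e heMo (a, b0) hab0Mo h2
          rw [he]; exact Finset.mem_insert_self _ _
        · have hne : e ≠ (a, b0) := by
            intro h; rw [h] at h2; exact hb0nPB' h2
          have h3 := (hMocross' e (Finset.mem_erase.mpr ⟨hne, heMo⟩)).mpr h2
          exact Finset.mem_insert.mpr (Or.inr h3)
    · rw [hMPB, Finset.card_insert_of_notMem ha1b0nf,
        Finset.card_insert_of_notMem hanPA']
      omega

  · -- b0 is free in M: path is [a, b0]
    push_neg at hfree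
    refine ⟨[a, b0], {a}, {b0}, rfl, by simp, by simp [hane], ?_, by simp [haA'],
      by simp [hb0B'], by simp, by simp, ?_, ?_, ?_, ?_, ?_, ?_, ?_, ?_, ?_, ?_⟩
    · ext x; simp [or_comm]
    · intro p hp
      have : b0 = p := by simpa using hp
      subst this
      intro e heM
      exact ⟨fun h => (Finset.disjoint_left.mp hAB (h ▸ (hM.1 e heM).1)) hb0B,
        fun h => hfree e heM h⟩
    · simp [List.Chain', List.isChain_cons_cons, haA, hb0B]
    · have : pathEdges A [a, b0] = [(a, b0)] := by simp [pathEdges, edgeOf, haA]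
      rw [this]; simp [List.Chain', List.isChain_singleton]
    · intro e he
      have : pathEdges A [a, b0] = [(a, b0)] := by simp [pathEdges, edgeOf, haA]
      rw [this] at he
      simp at he
      subst he
      exact hab0M
    · have hpe : pathEdges A [a, b0] = [(a, b0)] := by simp [pathEdges, edgeOf, haA]
      have hmem : (a, b0) ∈ Mo.filter (fun e => e.1 ∈ ({a} : Finset (Pt d))) := by
        simp [Finset.mem_filter, hab0Mo]
      have hkey : dist a b0 ≤ matchCost (Mo.filter (fun e => e.1 ∈ ({a} : Finset (Pt d)))) := by
        have := Finset.single_le_sum (f := fun e : Pt d × Pt d => dist e.1 e.2)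
          (fun e _ => dist_nonneg) hmem
        simpa [matchCost] using this
      rw [hpe, netCost_cons, if_neg hab0M]
      simpa [netCost] using hkey
    · have hpe : pathEdges A [a, b0] = [(a, b0)] := by simp [pathEdges, edgeOf, haA]
      have hmem : (a, b0) ∈ Mo.filter (fun e => e.1 ∈ ({a} : Finset (Pt d))) := by
        simp [Finset.mem_filter, hab0Mo]
      have hkey : dist a b0 ≤ matchCost (Mo.filter (fun e => e.1 ∈ ({a} : Finset (Pt d)))) := by
        have := Finset.single_le_sum (f := fun e : Pt d × Pt d => dist e.1 e.2)
          (fun e _ => dist_nonneg) hmem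
        simpa [matchCost] using this
      have h2 := matchCost_nonneg (M.filter fun e => e.2 ∈ ({b0} : Finset (Pt d)))
      rw [hpe, eucLen_cons]
      simp only [eucLen, List.map_nil, List.sum_nil, add_zero]
      linarith
    · intro e heM h2
      exact absurd (by simpa using h2) (hfree e heM)
    · intro e heM h1
      exact Or.inl (by simpa using h1)
    · intro e heMo
      constructor
      · intro h1
        have : e = (a, b0) := hMo.2.1 e heMo (a, b0) hab0Mo (by simpa using h1)
        simp [this]
      · intro h2
        have : e = (a, b0) := hMo.2.2 e heMo (a, b0) hab0Mo (by simpa using h2)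
        simp [this]
    · have hflt : M.filter (fun e => e.2 ∈ ({b0} : Finset (Pt d))) = ∅ := by
        rw [Finset.filter_eq_empty_iff]
        intro e heM h
        exact hfree e heM (by simpa using h)
      rw [hflt]
      simp

/-- Decomposition: there are `m - |M restricted|` disjoint augmenting paths with total
net cost at most `matchCost Mo` and total length at most `matchCost Mo + matchCost M|`. -/
lemma decompose {d : ℕ} (A B : Finset (Pt d)) (hAB : Disjoint A B)
    (M : Finset (Pt d × Pt d)) (hM : IsMatching A B M) :
    ∀ m : ℕ, ∀ A' B' : Finset (Pt d), ∀ Mo : Finset (Pt d × Pt d),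
    A'.card = m → B'.card = m → A' ⊆ A → B' ⊆ B →
    IsMatching A' B' Mo → Mo.card = m →
    (∀ e ∈ M, e.2 ∈ B' → e.1 ∈ A') →
    (∀ e ∈ M, e.1 ∈ A' → e.2 ∈ B') →
    ∃ Ls : List (List (Pt d)),
      Ls.length + (M.filter (fun e => e.1 ∈ A')).card = m ∧
      (∀ L ∈ Ls, IsAugPath A B M L) ∧
      (Ls.map fun L => netCost M (pathEdges A L)).sum ≤ matchCost Mo ∧
      (Ls.map fun L => eucLen (pathEdges A L)).sum
        ≤ matchCost Mo + matchCost (M.filter (fun e => e.1 ∈ A')) := by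
  intro m
  induction m using Nat.strong_induction_on with
  | _ m IH =>
  intro A' B' Mo hcardA hcardB hA'A hB'B hMo hMocard hC hC2
  have hinjM : Set.InjOn (Prod.fst : Pt d × Pt d → Pt d)
      ((M.filter (fun e => e.1 ∈ A') : Finset (Pt d × Pt d)) : Set (Pt d × Pt d)) := by
    intro e he e' he' h
    rw [Finset.mem_coe] at he he'
    exact hM.2.1 e (Finset.mem_filter.mp he).1 e' (Finset.mem_filter.mp he').1 h
  have hkle : (M.filter (fun e => e.1 ∈ A')).card ≤ m := by
    rw [← Finset.card_image_of_injOn hinjM, ← hcardA]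
    apply Finset.card_le_card
    intro x hx
    obtain ⟨e, he, rfl⟩ := Finset.mem_image.mp hx
    exact (Finset.mem_filter.mp he).2
  by_cases hkm : (M.filter (fun e => e.1 ∈ A')).card = m
  · refine ⟨[], by simpa using hkm, by simp, by simpa using matchCost_nonneg Mo, ?_⟩
    have h1 := matchCost_nonneg Mo
    have h2 := matchCost_nonneg (M.filter (fun e => e.1 ∈ A'))
    simp only [List.map_nil, List.sum_nil]
    linarith
  · -- there is a free vertex in A'
    have hklt : (M.filter (fun e => e.1 ∈ A')).card < m := lt_of_le_of_ne hkle hkm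
    have himlt : ((M.filter (fun e => e.1 ∈ A')).image Prod.fst).card < A'.card := by
      rw [Finset.card_image_of_injOn hinjM, hcardA]; exact hklt
    have himsub : (M.filter (fun e => e.1 ∈ A')).image Prod.fst ⊆ A' := by
      intro x hx
      obtain ⟨e, he, rfl⟩ := Finset.mem_image.mp hx
      exact (Finset.mem_filter.mp he).2
    obtain ⟨a, haA', hanotim⟩ :=
      Finset.exists_of_ssubset (himsub.ssubset_of_ne
        (fun h => by rw [h] at himlt; exact lt_irrefl _ himlt))
    have hfreea : IsFree M a := by
      intro e heM
      constructor
      · intro h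
        apply hanotim
        apply Finset.mem_image.mpr
        exact ⟨e, Finset.mem_filter.mpr ⟨heM, h ▸ haA'⟩, h⟩
      · intro h
        exact Finset.disjoint_left.mp hAB (hA'A haA') (h ▸ (hM.1 e heM).2)
    have hInv : ∀ e ∈ M, e.1 = a → e.2 ∉ B' := by
      intro e heM h1
      exact absurd h1 (hfreea e heM).1
    obtain ⟨L, PA, PB, hhead, hlen, hnd, htf, hPAsub, hPBsub, haPA, hcardP, hlast, hbip,
        halt, hfirst, hnet, heuc, hcrossB, hcrossA, hMocross, hcount⟩ :=
      buildPath A B hAB M hM m A' B' Mo a hcardA hA'A hB'B hMo hMocard haA' hC hInv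
    have hpa1 : 1 ≤ PA.card := Finset.card_pos.mpr ⟨a, haPA⟩
    have hpam : PA.card ≤ m := by
      rw [← hcardA]; exact Finset.card_le_card hPAsub
    have hA''card : (A' \ PA).card = m - PA.card := by
      rw [Finset.card_sdiff_of_subset hPAsub, hcardA]
    have hB''card : (B' \ PB).card = m - PA.card := by
      rw [Finset.card_sdiff_of_subset hPBsub, hcardB, hcardP]
    have hMo'' : IsMatching (A' \ PA) (B' \ PB) (Mo.filter (fun e => e.1 ∉ PA)) := by
      refine ⟨fun e he => ?_,
        fun e he e' he' h => hMo.2.1 e (Finset.mem_filter.mp he).1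
          e' (Finset.mem_filter.mp he').1 h,
        fun e he e' he' h => hMo.2.2 e (Finset.mem_filter.mp he).1
          e' (Finset.mem_filter.mp he').1 h⟩
      obtain ⟨heMo, h1⟩ := Finset.mem_filter.mp he
      refine ⟨Finset.mem_sdiff.mpr ⟨(hMo.1 e heMo).1, h1⟩,
        Finset.mem_sdiff.mpr ⟨(hMo.1 e heMo).2, fun h2 => h1 ((hMocross e heMo).mpr h2)⟩⟩
    -- the Mo edges leaving PA number exactly PA.card
    have himgPA : (Mo.filter (fun e => e.1 ∈ PA)).image Prod.fst = PA := by
      apply Finset.Subset.antisymm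
      · intro x hx
        obtain ⟨e, he, rfl⟩ := Finset.mem_image.mp hx
        exact (Finset.mem_filter.mp he).2
      · intro x hxPA
        -- Mo is perfect on A', so x has an Mo-edge
        have himg : Mo.image Prod.fst = A' := by
          apply Finset.eq_of_subset_of_card_le
          · intro y hy
            obtain ⟨e, he, rfl⟩ := Finset.mem_image.mp hy
            exact (hMo.1 e he).1
          · rw [Finset.card_image_of_injOn (fun e he e' he' h => hMo.2.1 e he e' he' h),
              hMocard, hcardA]
        obtain ⟨e, he, rfl⟩ := Finset.mem_image.mp (himg ▸ hPAsub hxPA)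
        exact Finset.mem_image.mpr ⟨e, Finset.mem_filter.mpr ⟨he, hxPA⟩, rfl⟩
    have hMoPAcard : (Mo.filter (fun e => e.1 ∈ PA)).card = PA.card := by
      have h' : ((Mo.filter (fun e => e.1 ∈ PA)).image Prod.fst).card
          = (Mo.filter (fun e => e.1 ∈ PA)).card :=
        Finset.card_image_of_injOn (fun e he e' he' h => hMo.2.1 e
          (Finset.mem_coe.mp (by simpa using (Finset.mem_filter.mp (Finset.mem_coe.mp he)).1))
          e' (Finset.mem_coe.mp (by simpa using (Finset.mem_filter.mp (Finset.mem_coe.mp he')).1)) h)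
      rw [himgPA] at h'
      exact h'.symm
    have hMosplitcard := Finset.card_filter_add_card_filter_not
      (s := Mo) (p := fun e => e.1 ∈ PA)
    have hMo''card : (Mo.filter (fun e => e.1 ∉ PA)).card = m - PA.card := by
      rw [hMoPAcard, hMocard] at hMosplitcard
      omega
    have hC'' : ∀ e ∈ M, e.2 ∈ B' \ PB → e.1 ∈ A' \ PA := by
      intro e heM h2
      obtain ⟨h2B', h2PB⟩ := Finset.mem_sdiff.mp h2
      refine Finset.mem_sdiff.mpr ⟨hC e heM h2B', fun h1 => ?_⟩
      rcases hcrossA e heM h1 with h | h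
      · exact (hfreea e heM).1 h
      · exact h2PB h
    have hC2'' : ∀ e ∈ M, e.1 ∈ A' \ PA → e.2 ∈ B' \ PB := by
      intro e heM h1
      obtain ⟨h1A', h1PA⟩ := Finset.mem_sdiff.mp h1
      exact Finset.mem_sdiff.mpr ⟨hC2 e heM h1A', fun h2 => h1PA (hcrossB e heM h2)⟩
    obtain ⟨Ls', hlen', haug', hnet', heuc'⟩ :=
      IH (m - PA.card) (by omega) (A' \ PA) (B' \ PB) (Mo.filter (fun e => e.1 ∉ PA))
        hA''card hB''card (fun x hx => hA'A (Finset.mem_sdiff.mp hx).1)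
        (fun x hx => hB'B (Finset.mem_sdiff.mp hx).1) hMo'' hMo''card hC'' hC2''
    -- identify the M-edges inside the path
    have hMPAPB : M.filter (fun e => e.1 ∈ PA) = M.filter (fun e => e.2 ∈ PB) := by
      ext e
      simp only [Finset.mem_filter]
      constructor
      · rintro ⟨heM, h1⟩
        rcases hcrossA e heM h1 with h | h
        · exact absurd h (hfreea e heM).1
        · exact ⟨heM, h⟩
      · rintro ⟨heM, h2⟩
        exact ⟨heM, hcrossB e heM h2⟩
    have hMsplit : M.filter (fun e => e.1 ∈ A')
        = M.filter (fun e => e.1 ∈ A' \ PA) ∪ M.filter (fun e => e.1 ∈ PA) := by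
      ext e
      simp only [Finset.mem_filter, Finset.mem_union, Finset.mem_sdiff]
      constructor
      · rintro ⟨heM, h1⟩
        by_cases h : e.1 ∈ PA
        · exact Or.inr ⟨heM, h⟩
        · exact Or.inl ⟨heM, h1, h⟩
      · rintro (⟨heM, h1, _⟩ | ⟨heM, h1⟩)
        · exact ⟨heM, h1⟩
        · exact ⟨heM, hPAsub h1⟩
    have hMdisj : Disjoint (M.filter (fun e => e.1 ∈ A' \ PA))
        (M.filter (fun e => e.1 ∈ PA)) := by
      rw [Finset.disjoint_left]
      intro e he1 he2
      exact (Finset.mem_sdiff.mp (Finset.mem_filter.mp he1).2).2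
        (Finset.mem_filter.mp he2).2
    have hMcardsplit : (M.filter (fun e => e.1 ∈ A')).card
        = (M.filter (fun e => e.1 ∈ A' \ PA)).card + (M.filter (fun e => e.1 ∈ PA)).card := by
      rw [hMsplit, Finset.card_union_of_disjoint hMdisj]
    have hMcostsplit : matchCost (M.filter (fun e => e.1 ∈ A'))
        = matchCost (M.filter (fun e => e.1 ∈ A' \ PA))
          + matchCost (M.filter (fun e => e.1 ∈ PA)) := by
      rw [hMsplit, matchCost, Finset.sum_union hMdisj]; rfl
    have hMocostsplit : matchCost (Mo.filter (fun e => e.1 ∈ PA))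
        + matchCost (Mo.filter (fun e => e.1 ∉ PA)) = matchCost Mo := by
      rw [matchCost, matchCost, matchCost]
      exact Finset.sum_filter_add_sum_filter_not Mo (fun e => e.1 ∈ PA) _
    have hMPAcount : (M.filter (fun e => e.1 ∈ PA)).card + 1 = PA.card := by
      rw [hMPAPB]; exact hcount
    refine ⟨L :: Ls', ?_, ?_, ?_, ?_⟩
    · simp only [List.length_cons]
      omega
    · intro L' hL'
      rcases List.mem_cons.mp hL' with rfl | hL'
      · refine ⟨⟨hlen, hnd, ?_, hbip, halt⟩, ?_, hlast⟩
        · intro p hp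
          have : p ∈ PA ∪ PB := htf ▸ List.mem_toFinset.mpr hp
          rcases Finset.mem_union.mp this with h | h
          · exact Finset.mem_union.mpr (Or.inl (hA'A (hPAsub h)))
          · exact Finset.mem_union.mpr (Or.inr (hB'B (hPBsub h)))
        · intro p hp
          rw [hhead] at hp
          have : a = p := by simpa using hp
          exact this ▸ hfreea
      · exact haug' L' hL'
    · simp only [List.map_cons, List.sum_cons]
      have h1 := matchCost_nonneg (M.filter (fun e => e.2 ∈ PB))
      linarith [hnet, hnet', hMocostsplit]
    · simp only [List.map_cons, List.sum_cons]
      have hcosteq : matchCost (M.filter (fun e => e.1 ∈ PA))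
          = matchCost (M.filter (fun e => e.2 ∈ PB)) := by rw [hMPAPB]
      linarith [heuc, heuc', hMocostsplit, hMcostsplit, hcosteq]

lemma adj_sum {d : ℕ} (c θ : ℝ) (M : Finset (Pt d × Pt d)) (A : Finset (Pt d))
    (Ls : List (List (Pt d))) :
    (Ls.map fun L => adjCost c θ M (pathEdges A L)).sum
      = (Ls.map fun L => netCost M (pathEdges A L)).sum
        + c * θ * (Ls.map fun L => eucLen (pathEdges A L)).sum := by
  induction Ls with
  | nil => simp
  | cons L t ih =>
    rw [List.map_cons, List.map_cons, List.map_cons, List.sum_cons, List.sum_cons,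
      List.sum_cons, ih, adjCost]
    ring

end Aux


/-- if `M` is a matching of size `i < n`, `Mopt` is a minimum-cost perfect
matching, and `astar = adj*_{ε̄,M}` is the minimum `ε̄`-adjusted cost of an augmenting path
with respect to `M`, then
`(n − i)·adj*_{ε̄,M} ≤ cost(Mopt) + c0·ε̄·(cost(Mopt) + cost(M))
                    = (1 + c0·ε̄)·cost(Mopt) + c0·ε̄·cost(M)`. -/
theorem stmt8 (d n i : ℕ) (hn : 1 ≤ n) (A B : Finset (Pt d)) (hAB : Disjoint A B)
    (hA : A.card = n) (hB : B.card = n)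
    (c0 εu : ℝ) (hc0 : 0 < c0) (hεu : 0 < εu)
    (M : Finset (Pt d × Pt d)) (hM : IsMatching A B M)
    (hMcard : M.card = i) (hin : i < n)
    (Mopt : Finset (Pt d × Pt d)) (hMopt : IsMatching A B Mopt) (hMoptcard : Mopt.card = n)
    (hMoptmin : ∀ M'' : Finset (Pt d × Pt d),
      IsMatching A B M'' → M''.card = n → matchCost Mopt ≤ matchCost M'')
    (astar : ℝ) (hastar : IsLeast (adjSet c0 εu A B M) astar) :
    ((n : ℝ) - (i : ℝ)) * astar ≤
        matchCost Mopt + c0 * εu * (matchCost Mopt + matchCost M) ∧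
      matchCost Mopt + c0 * εu * (matchCost Mopt + matchCost M) =
        (1 + c0 * εu) * matchCost Mopt + c0 * εu * matchCost M := by
  have hfA : M.filter (fun e => e.1 ∈ A) = M :=
    Finset.filter_true_of_mem (fun e he => (hM.1 e he).1)
  obtain ⟨Ls, hlenk, haug, hnet, heuc⟩ :=
    decompose A B hAB M hM n A B Mopt hA hB (Finset.Subset.refl A) (Finset.Subset.refl B)
      hMopt hMoptcard (fun e heM _ => (hM.1 e heM).1) (fun e heM _ => (hM.1 e heM).2)
  rw [hfA, hMcard] at hlenk
  rw [hfA] at heuc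
  constructor
  · have hb : ∀ x ∈ Ls.map (fun L => adjCost c0 εu M (pathEdges A L)), astar ≤ x := by
      intro x hx
      obtain ⟨L, hL, rfl⟩ := List.mem_map.mp hx
      exact hastar.2 ⟨L, haug L hL, rfl⟩
    have h1 : (Ls.length : ℝ) * astar
        ≤ (Ls.map (fun L => adjCost c0 εu M (pathEdges A L))).sum := by
      have h := list_mul_le_sum _ astar hb
      simpa using h
    have hce : (0:ℝ) ≤ c0 * εu := le_of_lt (mul_pos hc0 hεu)
    have hcast : ((n : ℝ) - (i : ℝ)) = (Ls.length : ℝ) := by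
      have : Ls.length = n - i := by omega
      rw [this, Nat.cast_sub (le_of_lt hin)]
    rw [hcast]
    have h2 := adj_sum c0 εu M A Ls
    have h3 : c0 * εu * (Ls.map fun L => eucLen (pathEdges A L)).sum
        ≤ c0 * εu * (matchCost Mopt + matchCost M) :=
      mul_le_mul_of_nonneg_left heuc hce
    linarith
  · ring
end
end
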